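/- Let g : ℕ → ℕ be the function defined by g(k) = 1 for k ≤ 4 and g(k) = 2^m for 4^m < k ≤ 4^{m+1} (m > 1), and let f(x) = log(1+x). Then Z_g(f) is not a simple density ideal: for every h ∈ H (ℕ-valued weight function), Z_g(f) ≠ Z_h, where Z_h = {C ⊆ ℕ : limsup_{k→∞} |C ∩ [0,k-1]|/h(k) = 0}. -/

import Mathlib

open Filter Topology

/-- `cnt C k` is the number of elements of `C` in `[0, k-1]`. -/
noncomputable def cnt (C : Set ℕ) (k : ℕ) : ℕ := (C ∩ Set.Iio k).ncard

/-- A modulus function `f : [0,∞) → [0,∞)`: nonnegative, increasing, subadditive,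
vanishing exactly at `0`, and right continuous at `0`. -/
def IsModulus (f : ℝ → ℝ) : Prop :=
  (∀ x, 0 ≤ x → 0 ≤ f x) ∧ MonotoneOn f (Set.Ici 0) ∧
  (∀ x y, 0 ≤ x → 0 ≤ y → f (x + y) ≤ f x + f y) ∧
  (∀ x, 0 ≤ x → (f x = 0 ↔ x = 0)) ∧ ContinuousWithinAt f (Set.Ici 0) 0

/-- `f` is unbounded on `[0,∞)`. -/
def IsUnboundedMod (f : ℝ → ℝ) : Prop := ∀ M : ℝ, ∃ x : ℝ, 0 ≤ x ∧ M < f x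

/-- `H↑`: nondecreasing `ℕ`-valued weight functions, i.e. monotone `g : ℕ → ℕ`
with `g(k) → ∞` and `k / g(k)` not converging to `0`. -/
def InHup (g : ℕ → ℕ) : Prop :=
  Monotone g ∧ Tendsto g atTop atTop ∧
  ¬ Tendsto (fun k : ℕ => (k : ℝ) / (g k : ℝ)) atTop (nhds 0)

/-- The modular simple density ideal `Z_g(f)` for a `ℕ`-valued weight function. -/
def ZgfN (f : ℝ → ℝ) (g : ℕ → ℕ) : Set (Set ℕ) :=
  {C | Tendsto (fun k => f (cnt C k) / f (g k : ℝ)) atTop (nhds 0)}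

/-- The weight function with `g(k) = 1` for `k ≤ 4` and `g(k) = 2^m` for
`4^m < k ≤ 4^(m+1)`. -/
noncomputable def gEx (k : ℕ) : ℕ := if k ≤ 4 then 1 else 2 ^ Nat.log 4 (k - 1)

/-- The modulus function `f(x) = log(1+x)`. -/
noncomputable def fLog (x : ℝ) : ℝ := Real.log (1 + x)

/-- Membership in `H`: a `ℕ`-valued weight function. -/
def InH (h : ℕ → ℕ) : Prop :=
  Tendsto h atTop atTop ∧ ¬ Tendsto (fun k : ℕ => (k : ℝ) / (h k : ℝ)) atTop (nhds 0)

/-- The simple density ideal `Z_h`. -/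
def Zh (h : ℕ → ℕ) : Set (Set ℕ) :=
  {C | Tendsto (fun k => (cnt C k : ℝ) / (h k : ℝ)) atTop (nhds 0)}

lemma cnt_finite (C : Set ℕ) (k : ℕ) : (C ∩ Set.Iio k).Finite :=
  (Set.finite_Iio k).inter_of_right _

lemma Iio_succ' (k : ℕ) : Set.Iio (k+1) = insert k (Set.Iio k) := by
  ext x; simp

lemma cnt_succ_mem (C : Set ℕ) (k : ℕ) (hk : k ∈ C) : cnt C (k+1) = cnt C k + 1 := by
  unfold cnt
  rw [Iio_succ']
  have h2 : C ∩ insert k (Set.Iio k) = insert k (C ∩ Set.Iio k) := by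
    ext x
    by_cases hx : x = k
    · simp [hx, hk]
    · simp only [Set.mem_inter_iff, Set.mem_insert_iff, Set.mem_Iio]
      constructor
      · rintro ⟨h1, h2 | h2⟩; · omega
        exact Or.inr ⟨h1, h2⟩
      · rintro (h1 | ⟨h1, h2⟩); · omega
        exact ⟨h1, Or.inr h2⟩
  rw [h2, Set.ncard_insert_of_notMem (by simp) (cnt_finite C k)]

lemma cnt_succ_not_mem (C : Set ℕ) (k : ℕ) (hk : k ∉ C) : cnt C (k+1) = cnt C k := by
  unfold cnt
  rw [Iio_succ']
  have h2 : C ∩ insert k (Set.Iio k) = C ∩ Set.Iio k := by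
    ext x
    by_cases hx : x = k
    · simp [hx, hk]
    · simp only [Set.mem_inter_iff, Set.mem_insert_iff, Set.mem_Iio]
      constructor
      · rintro ⟨h1, h2 | h2⟩; · omega
        exact ⟨h1, h2⟩
      · rintro ⟨h1, h2⟩; exact ⟨h1, Or.inr h2⟩
  rw [h2]

lemma cnt_mono (C : Set ℕ) {j k : ℕ} (h : j ≤ k) : cnt C j ≤ cnt C k :=
  Set.ncard_le_ncard (Set.inter_subset_inter_right _ (Set.Iio_subset_Iio h)) (cnt_finite C k)

lemma cnt_of_steps (a : ℕ → ℕ) (h0 : a 0 = 0)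
    (hstep : ∀ k, a k ≤ a (k+1) ∧ a (k+1) ≤ a k + 1) :
    ∀ k, cnt {j | a j < a (j+1)} k = a k := by
  intro k
  induction k with
  | zero =>
    have : Set.Iio 0 = (∅ : Set ℕ) := by ext x; simp
    simp [cnt, h0, this]
  | succ k ih =>
    by_cases hk : a k < a (k+1)
    · rw [cnt_succ_mem {j | a j < a (j+1)} k hk, ih]; have := hstep k; omega
    · rw [cnt_succ_not_mem {j | a j < a (j+1)} k hk, ih]; have := hstep k; omega

lemma fLog_cnt_nonneg (C : Set ℕ) (k : ℕ) : 0 ≤ fLog (cnt C k) := by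
  unfold fLog
  apply Real.log_nonneg
  have : (0:ℝ) ≤ (cnt C k : ℝ) := Nat.cast_nonneg _
  linarith

lemma fLog_gEx_pos (k : ℕ) : 0 < fLog (gEx k) := by
  unfold fLog gEx
  apply Real.log_pos
  have h1 : 1 ≤ (if k ≤ 4 then 1 else 2 ^ Nat.log 4 (k - 1)) := by
    split
    · exact le_refl 1
    · exact Nat.one_le_two_pow
  have : (1:ℝ) ≤ ((if k ≤ 4 then 1 else 2 ^ Nat.log 4 (k - 1) : ℕ) : ℝ) := by
    exact_mod_cast h1
  linarith

lemma fLog_gEx_le {k : ℕ} (hk : 5 ≤ k) : fLog (gEx k) ≤ Real.log k := by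
  have hk4 : ¬ k ≤ 4 := by omega
  set m := Nat.log 4 (k - 1) with hm
  have hm1 : 1 ≤ m := Nat.log_pos (by norm_num) (by omega)
  have h4m : 4 ^ m ≤ k - 1 := Nat.pow_log_le_self 4 (by omega)
  have key : 1 + 2 ^ m ≤ k := by
    have h1 : 2 ^ (m + 1) ≤ 4 ^ m := by
      have : (4:ℕ) ^ m = 2 ^ (2 * m) := by
        rw [show (4:ℕ) = 2^2 by norm_num, ← pow_mul]
      rw [this]
      exact Nat.pow_le_pow_right (by norm_num) (by omega)
    have h2 : 1 + 2 ^ m ≤ 2 ^ (m + 1) := by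
      have := Nat.one_le_two_pow (n := m)
      rw [pow_succ]; omega
    omega
  unfold fLog gEx
  rw [if_neg hk4, ← hm]
  apply Real.log_le_log (by positivity)
  exact_mod_cast key

lemma fLog_gEx_ge {k : ℕ} (hk : 5 ≤ k) : Real.log k ≤ 5 * fLog (gEx k) := by
  have hk4 : ¬ k ≤ 4 := by omega
  set m := Nat.log 4 (k - 1) with hm
  have hm1 : 1 ≤ m := Nat.log_pos (by norm_num) (by omega)
  have h4m : k ≤ 4 ^ (m + 1) := by
    have h := Nat.lt_pow_succ_log_self (b := 4) (by norm_num) (k - 1)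
    rw [Nat.succ_eq_add_one, ← hm] at h
    omega
  have h1 : Real.log k ≤ (2 * m + 2) * Real.log 2 := by
    calc Real.log k ≤ Real.log ((4:ℝ) ^ (m+1)) := by
          apply Real.log_le_log (by positivity)
          exact_mod_cast h4m
      _ = (2 * m + 2) * Real.log 2 := by
          rw [show (4:ℝ) = 2^2 by norm_num, ← pow_mul, Real.log_pow]
          push_cast; ring
  have h2 : (m : ℝ) * Real.log 2 ≤ fLog (gEx k) := by
    unfold fLog gEx
    rw [if_neg hk4, ← hm]
    calc (m : ℝ) * Real.log 2 = Real.log ((2:ℝ) ^ m) := by rw [Real.log_pow]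
      _ ≤ Real.log (1 + ((2^m : ℕ) : ℝ)) := by
          apply Real.log_le_log (by positivity)
          push_cast; linarith
  have hlog2 : (0:ℝ) ≤ Real.log 2 := Real.log_nonneg (by norm_num)
  have : (2 * (m:ℝ) + 2) * Real.log 2 ≤ 5 * ((m:ℝ) * Real.log 2) := by
    have hm1' : (1:ℝ) ≤ m := by exact_mod_cast hm1
    nlinarith
  push_cast at h1
  linarith

lemma mem_ZgfN_of (C : Set ℕ)
    (h2 : Tendsto (fun k : ℕ => Real.log (1 + (cnt C k : ℝ)) / Real.log k) atTop (nhds 0)) :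
    C ∈ ZgfN fLog gEx := by
  apply squeeze_zero' (g := fun k : ℕ => 5 * (Real.log (1 + (cnt C k : ℝ)) / Real.log k))
  · filter_upwards with k
    exact div_nonneg (fLog_cnt_nonneg C k) (fLog_gEx_pos k).le
  · filter_upwards [eventually_ge_atTop 5] with k hk
    have hN : 0 ≤ Real.log (1 + (cnt C k : ℝ)) := fLog_cnt_nonneg C k
    have hD : 0 < fLog (gEx k) := fLog_gEx_pos k
    have hlogk : 0 < Real.log k := by
      apply Real.log_pos
      have : (5:ℝ) ≤ k := by exact_mod_cast hk
      linarith
    have := fLog_gEx_ge hk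
    calc fLog (cnt C k) / fLog (gEx k)
        ≤ fLog (cnt C k) / (Real.log k / 5) := by
          rw [div_le_div_iff₀ hD (by linarith : (0:ℝ) < Real.log k / 5)]
          nlinarith [fLog_cnt_nonneg C k]
      _ = 5 * (Real.log (1 + (cnt C k : ℝ)) / Real.log k) := by
          unfold fLog; field_simp
  · simpa using h2.const_mul (5:ℝ)

lemma not_mem_ZgfN_of (C : Set ℕ) (c : ℝ) (hc : 0 < c)
    (hev : ∀ᶠ k : ℕ in atTop, c * Real.log k ≤ Real.log (1 + (cnt C k : ℝ))) :
    C ∉ ZgfN fLog gEx := by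
  intro hmem
  have hlt : ∀ᶠ k : ℕ in atTop, fLog (cnt C k) / fLog (gEx k) < c :=
    hmem.eventually_lt_const hc
  have : ∀ᶠ k : ℕ in atTop, False := by
    filter_upwards [hlt, hev, eventually_ge_atTop 5] with k h1 h2 hk5
    have hlogk : 0 < Real.log k := by
      apply Real.log_pos
      have : (5:ℝ) ≤ k := by exact_mod_cast hk5
      linarith
    have hD : 0 < fLog (gEx k) := fLog_gEx_pos k
    have hDle : fLog (gEx k) ≤ Real.log k := fLog_gEx_le hk5
    have hge : c ≤ fLog (cnt C k) / fLog (gEx k) := by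
      rw [le_div_iff₀ hD]
      calc c * fLog (gEx k) ≤ c * Real.log k := by nlinarith
        _ ≤ Real.log (1 + (cnt C k : ℝ)) := h2
        _ = fLog (cnt C k) := rfl
    linarith
  obtain ⟨k, hk⟩ := this.exists
  exact hk

lemma ncard_Ico' (a b : ℕ) : (Set.Ico a b).ncard = b - a := by
  rw [Set.ncard_eq_toFinset_card']; simp

lemma rpow_step {x : ℝ} (hx : 0 ≤ x) {c : ℝ} (hc0 : 0 ≤ c) (hc1 : c ≤ 1) :
    (x + 1) ^ c ≤ x ^ c + 1 := by
  have h := NNReal.rpow_add_le_add_rpow (Real.toNNReal x) 1 hc0 hc1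
  have h2 := NNReal.coe_le_coe.mpr h
  push_cast [NNReal.coe_rpow] at h2
  simpa [Real.coe_toNNReal x hx] using h2

lemma caseA (h : ℕ → ℕ) (n : ℕ) (hn : ∀ᶠ k : ℕ in atTop, k ≤ (h k)^(n+1)) :
    ∃ C : Set ℕ, Tendsto (fun k => (cnt C k : ℝ)/(h k : ℝ)) atTop (nhds 0) ∧ C ∉ ZgfN fLog gEx := by
  set e : ℝ := (((n:ℝ) + 1))⁻¹ with he
  have he0 : 0 < e := by positivity
  have he1 : e ≤ 1 := by
    rw [he]
    rw [inv_le_one_iff₀]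
    right; linarith [Nat.cast_nonneg (α := ℝ) n]
  set c : ℝ := e / 2 with hc
  have hc0 : 0 < c := by positivity
  have hc1 : c ≤ 1 := by linarith
  set a : ℕ → ℕ := fun k => ⌈(k:ℝ) ^ c⌉₊ with ha
  have ha0 : a 0 = 0 := by
    simp [ha, Real.zero_rpow hc0.ne']
  have hstep : ∀ k, a k ≤ a (k+1) ∧ a (k+1) ≤ a k + 1 := by
    intro k
    constructor
    · apply Nat.ceil_le_ceil
      apply Real.rpow_le_rpow (by positivity) (by exact_mod_cast Nat.le_succ k) hc0.le
    · have h1 : ((k+1:ℕ):ℝ) ^ c ≤ (k:ℝ) ^ c + 1 := by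
        push_cast
        exact rpow_step (Nat.cast_nonneg k) hc0.le hc1
      calc a (k+1) ≤ ⌈(k:ℝ) ^ c + 1⌉₊ := Nat.ceil_le_ceil h1
        _ = a k + 1 := by rw [Nat.ceil_add_one (by positivity)]
  set C : Set ℕ := {j | a j < a (j+1)} with hC
  have hcnt : ∀ k, cnt C k = a k := cnt_of_steps a ha0 hstep
  refine ⟨C, ?_, ?_⟩
  · -- cnt/h → 0
    apply squeeze_zero' (g := fun k : ℕ => (k:ℝ) ^ (-c) + (k:ℝ) ^ (-e))
    · filter_upwards with k
      positivity
    · filter_upwards [hn, eventually_ge_atTop 1] with k hk hk1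
      have hk1R : (1:ℝ) ≤ (k:ℝ) := by exact_mod_cast hk1
      have hkpos : (0:ℝ) < k := by linarith
      have hhk : (k:ℝ) ^ e ≤ (h k : ℝ) := by
        have h1 : (k:ℝ) ≤ ((h k : ℝ)) ^ ((n+1 : ℕ) : ℝ) := by
          rw [Real.rpow_natCast]
          exact_mod_cast hk
        have h2 := Real.rpow_le_rpow (by positivity) h1 (le_of_lt he0)
        rwa [← Real.rpow_mul (Nat.cast_nonneg _),
          show (((n+1:ℕ)):ℝ) * e = 1 by rw [he]; push_cast; field_simp,
          Real.rpow_one] at h2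
      have hepos : (0:ℝ) < (k:ℝ) ^ e := by positivity
      have hbound : (cnt C k : ℝ) / (h k : ℝ) ≤ ((k:ℝ)^c + 1) / (k:ℝ)^e := by
        apply div_le_div₀ (by positivity) ?_ hepos hhk
        rw [hcnt k]
        show ((⌈(k:ℝ)^c⌉₊ : ℕ) : ℝ) ≤ _
        exact le_of_lt (Nat.ceil_lt_add_one (by positivity))
      have h3 : (k:ℝ)^c / (k:ℝ)^e = (k:ℝ)^(-c) := by
        rw [← Real.rpow_sub hkpos, show c - e = -c by rw [hc]; ring]
      have h4 : 1 / (k:ℝ)^e = (k:ℝ)^(-e) := by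
        rw [Real.rpow_neg hkpos.le, one_div]
      refine hbound.trans (le_of_eq ?_)
      rw [add_div, h3, h4]
    · have t1 : Tendsto (fun k : ℕ => (k:ℝ) ^ (-c)) atTop (nhds 0) :=
        (tendsto_rpow_neg_atTop hc0).comp tendsto_natCast_atTop_atTop
      have t2 : Tendsto (fun k : ℕ => (k:ℝ) ^ (-e)) atTop (nhds 0) :=
        (tendsto_rpow_neg_atTop he0).comp tendsto_natCast_atTop_atTop
      simpa using t1.add t2
  · apply not_mem_ZgfN_of C c hc0
    filter_upwards [eventually_ge_atTop 1] with k hk1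
    have hk1R : (1:ℝ) ≤ (k:ℝ) := by exact_mod_cast hk1
    have hkpos : (0:ℝ) < k := by linarith
    calc c * Real.log k = Real.log ((k:ℝ) ^ c) := (Real.log_rpow hkpos c).symm
      _ ≤ Real.log (1 + (cnt C k : ℝ)) := by
          apply Real.log_le_log (by positivity)
          rw [hcnt k]
          have := Nat.le_ceil ((k:ℝ) ^ c)
          push_cast
          linarith

def QB (h : ℕ → ℕ) (n K S k : ℕ) : Prop :=
  (h k)^(n+2) < k ∧ S + 1 ≤ h k ∧ 2*(K+1) ≤ k ∧ 4 ≤ k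

noncomputable def kp (h : ℕ → ℕ) (hex : ∀ n K S : ℕ, ∃ k, QB h n K S k) : ℕ → ℕ × ℕ
  | 0 => ⟨(hex 0 0 0).choose, h ((hex 0 0 0).choose)⟩
  | n+1 =>
    ⟨(hex (n+1) (kp h hex n).1 (kp h hex n).2).choose,
     (kp h hex n).2 + h ((hex (n+1) (kp h hex n).1 (kp h hex n).2).choose)⟩

lemma kp_zero_spec (h : ℕ → ℕ) (hex : ∀ n K S : ℕ, ∃ k, QB h n K S k) :
    QB h 0 0 0 (kp h hex 0).1 ∧ (kp h hex 0).2 = h ((kp h hex 0).1) :=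
  ⟨(hex 0 0 0).choose_spec, rfl⟩

lemma kp_succ_spec (h : ℕ → ℕ) (hex : ∀ n K S : ℕ, ∃ k, QB h n K S k) (n : ℕ) :
    QB h (n+1) (kp h hex n).1 (kp h hex n).2 (kp h hex (n+1)).1 ∧
    (kp h hex (n+1)).2 = (kp h hex n).2 + h ((kp h hex (n+1)).1) :=
  ⟨(hex (n+1) (kp h hex n).1 (kp h hex n).2).choose_spec, rfl⟩

lemma caseB (h : ℕ → ℕ) (hinf : Tendsto h atTop atTop)
    (hB : ∀ m : ℕ, ∃ᶠ k in atTop, (h k)^(m+1) < k) :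
    ∃ C : Set ℕ,
      Tendsto (fun k : ℕ => Real.log (1 + (cnt C k : ℝ)) / Real.log k) atTop (nhds 0) ∧
      ¬ Tendsto (fun k : ℕ => (cnt C k : ℝ) / (h k : ℝ)) atTop (nhds 0) := by
  have hex : ∀ n K S : ℕ, ∃ k, QB h n K S k := by
    intro n K S
    have h1 : ∀ᶠ k in atTop, S + 1 ≤ h k := hinf.eventually_ge_atTop (S+1)
    have h2 : ∀ᶠ k in atTop, 2*(K+1) ≤ k ∧ 4 ≤ k := by
      filter_upwards [eventually_ge_atTop (max (2*(K+1)) 4)] with k hk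
      exact ⟨le_trans (le_max_left _ _) hk, le_trans (le_max_right _ _) hk⟩
    obtain ⟨k, hk1, hk2, hk3, hk4⟩ := ((hB (n+1)).and_eventually (h1.and h2)).exists
    exact ⟨k, hk1, hk2, hk3, hk4⟩
  set ks : ℕ → ℕ := fun n => (kp h hex n).1 with hks
  set Ss : ℕ → ℕ := fun n => (kp h hex n).2 with hSs
  set Hf : ℕ → ℕ := fun n => h (ks n) with hHf
  set b : ℕ → ℕ := fun n => ks n - Hf n with hb
  have hQ : ∀ n, (Hf n)^(n+2) < ks n := by
    intro n; cases n with
    | zero => exact (kp_zero_spec h hex).1.1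
    | succ n => exact (kp_succ_spec h hex n).1.1
  have h4 : ∀ n, 4 ≤ ks n := by
    intro n; cases n with
    | zero => exact (kp_zero_spec h hex).1.2.2.2
    | succ n => exact (kp_succ_spec h hex n).1.2.2.2
  have hH1 : ∀ n, 1 ≤ Hf n := by
    intro n; cases n with
    | zero => exact (kp_zero_spec h hex).1.2.1
    | succ n => exact le_trans (by omega) (kp_succ_spec h hex n).1.2.1
  have hS0 : Ss 0 = Hf 0 := (kp_zero_spec h hex).2
  have hSsucc : ∀ n, Ss (n+1) = Ss n + Hf (n+1) := fun n => (kp_succ_spec h hex n).2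
  have hSle : ∀ n, Ss n + 1 ≤ Hf (n+1) := fun n => (kp_succ_spec h hex n).1.2.1
  have hS2H : ∀ n, Ss n ≤ 2 * Hf n := by
    intro n; cases n with
    | zero => rw [hS0]; omega
    | succ n => rw [hSsucc]; have := hSle n; omega
  have h2H : ∀ n, 2 * Hf n ≤ ks n := by
    intro n
    have e1 : Hf n * Hf n ≤ (Hf n)^(n+2) := by
      calc Hf n * Hf n = (Hf n)^2 := (sq (Hf n)).symm
        _ ≤ (Hf n)^(n+2) := Nat.pow_le_pow_right (hH1 n) (by omega)
    rcases le_or_gt (Hf n) 1 with hc | hc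
    · have := h4 n; omega
    · have e2 : 2 * Hf n ≤ Hf n * Hf n := Nat.mul_le_mul_right (Hf n) hc
      have := hQ n; omega
  have hHk : ∀ n, Hf n ≤ ks n := fun n => le_trans (by omega) (h2H n)
  have hlt : ∀ n, ks n + Hf (n+1) < ks (n+1) := by
    intro n
    have e1 : 2*(ks n + 1) ≤ ks (n+1) := (kp_succ_spec h hex n).1.2.2.1
    have e2 := h2H (n+1)
    omega
  have hmono : StrictMono ks := by
    apply strictMono_nat_of_lt_succ
    intro n
    have := hlt n; have := hH1 (n+1); omega
  set C : Set ℕ := ⋃ n, Set.Ico (b n) (ks n) with hC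
  -- subset lemmas
  have sub0 : ∀ k, k ≤ ks 0 → C ∩ Set.Iio k ⊆ Set.Ico (b 0) (ks 0) := by
    intro k hk x ⟨hxC, hxk⟩
    simp only [Set.mem_Iio] at hxk
    obtain ⟨m, hm⟩ := Set.mem_iUnion.mp hxC
    obtain ⟨hm1, hm2⟩ := hm
    cases m with
    | zero => exact ⟨hm1, hm2⟩
    | succ m' =>
      exfalso
      have e1 : ks 0 ≤ ks m' := hmono.monotone (Nat.zero_le _)
      have e2 := hlt m'
      have e3 := hHk (m'+1)
      simp only [hb] at hm1
      omega
  have sub1 : ∀ n k, k ≤ ks (n+1) →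
      C ∩ Set.Iio k ⊆ (C ∩ Set.Iio (ks n)) ∪ Set.Ico (b (n+1)) (ks (n+1)) := by
    intro n k hk x ⟨hxC, hxk⟩
    simp only [Set.mem_Iio] at hxk
    obtain ⟨m, hm⟩ := Set.mem_iUnion.mp hxC
    obtain ⟨hm1, hm2⟩ := hm
    rcases lt_trichotomy m (n+1) with hc | hc | hc
    · left
      exact ⟨hxC, lt_of_lt_of_le hm2 (hmono.monotone (by omega))⟩
    · right
      rw [hc] at hm1 hm2
      exact ⟨hm1, hm2⟩
    · exfalso
      obtain ⟨m', rfl⟩ : ∃ m', m = m'+1 := ⟨m-1, by omega⟩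
      have e1 : ks (n+1) ≤ ks m' := hmono.monotone (by omega)
      have e2 := hlt m'
      have e3 := hHk (m'+1)
      simp only [hb] at hm1
      omega
  have sub2 : ∀ n k, k ≤ b (n+1) → C ∩ Set.Iio k ⊆ C ∩ Set.Iio (ks n) := by
    intro n k hk x ⟨hxC, hxk⟩
    simp only [Set.mem_Iio] at hxk
    obtain ⟨m, hm⟩ := Set.mem_iUnion.mp hxC
    obtain ⟨hm1, hm2⟩ := hm
    rcases lt_or_ge m (n+1) with hc | hc
    · exact ⟨hxC, lt_of_lt_of_le hm2 (hmono.monotone (by omega))⟩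
    · exfalso
      obtain ⟨m', rfl⟩ : ∃ m', m = m'+1 := ⟨m-1, by omega⟩
      rcases eq_or_lt_of_le (show n ≤ m' by omega) with hc2 | hc2
      · subst hc2; omega
      · have e1 : ks (n+1) ≤ ks m' := hmono.monotone (by omega)
        have e2 := hlt m'
        have e3 := hHk (m'+1)
        have e4 := hHk (n+1)
        simp only [hb] at hm1 hk
        omega
  have bnd1 : ∀ n, ∀ k, k ≤ ks n → cnt C k ≤ Ss n := by
    intro n
    induction n with
    | zero =>
      intro k hk
      calc cnt C k ≤ (Set.Ico (b 0) (ks 0)).ncard :=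
            Set.ncard_le_ncard (sub0 k hk) (Set.finite_Ico _ _)
        _ = ks 0 - b 0 := ncard_Ico' _ _
        _ = Hf 0 := by simp only [hb]; have := hHk 0; omega
        _ = Ss 0 := hS0.symm
    | succ n ih =>
      intro k hk
      calc cnt C k ≤ ((C ∩ Set.Iio (ks n)) ∪ Set.Ico (b (n+1)) (ks (n+1))).ncard :=
            Set.ncard_le_ncard (sub1 n k hk) ((cnt_finite C (ks n)).union (Set.finite_Ico _ _))
        _ ≤ (C ∩ Set.Iio (ks n)).ncard + (Set.Ico (b (n+1)) (ks (n+1))).ncard :=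
            Set.ncard_union_le _ _
        _ ≤ Ss n + Hf (n+1) := by
            have e1 : (C ∩ Set.Iio (ks n)).ncard = cnt C (ks n) := rfl
            have e2 := ih (ks n) (le_refl _)
            have e3 : (Set.Ico (b (n+1)) (ks (n+1))).ncard = Hf (n+1) := by
              rw [ncard_Ico']; simp only [hb]; have := hHk (n+1); omega
            omega
        _ = Ss (n+1) := (hSsucc n).symm
  have bnd2 : ∀ n k, k ≤ b (n+1) → cnt C k ≤ Ss n := by
    intro n k hk
    calc cnt C k ≤ cnt C (ks n) :=
          Set.ncard_le_ncard (sub2 n k hk) (cnt_finite C (ks n))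
      _ ≤ Ss n := bnd1 n (ks n) (le_refl _)
  have lowbnd : ∀ n, Hf n ≤ cnt C (ks n) := by
    intro n
    have hsub : Set.Ico (b n) (ks n) ⊆ C ∩ Set.Iio (ks n) :=
      fun x hx => ⟨Set.mem_iUnion.mpr ⟨n, hx⟩, hx.2⟩
    calc Hf n = (Set.Ico (b n) (ks n)).ncard := by
          rw [ncard_Ico']; simp only [hb]; have := hHk n; omega
      _ ≤ cnt C (ks n) := Set.ncard_le_ncard hsub (cnt_finite C (ks n))
  refine ⟨C, ?_, ?_⟩
  · -- tendsto log ratio to 0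
    rw [Metric.tendsto_nhds]
    intro ε hε
    obtain ⟨N, hN⟩ : ∃ N : ℕ, (1:ℝ)/((N:ℝ)+2) < ε/2 := by
      obtain ⟨N, hN⟩ := exists_nat_gt (2/ε)
      refine ⟨N, ?_⟩
      have h1 : (0:ℝ) < (N:ℝ)+2 := by positivity
      rw [div_lt_div_iff₀ h1 two_pos]
      have h2 : 2/ε < (N:ℝ)+2 := by linarith
      rw [div_lt_iff₀ hε] at h2
      nlinarith
    have hlogT : Tendsto (fun k : ℕ => Real.log k) atTop atTop :=
      Real.tendsto_log_atTop.comp tendsto_natCast_atTop_atTop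
    filter_upwards [eventually_ge_atTop (ks N + 1),
      hlogT.eventually_ge_atTop (max 1 (2*Real.log 6/ε))] with k hk1 hk2
    have hlogk1 : (1:ℝ) ≤ Real.log k := le_trans (le_max_left _ _) hk2
    have hlogk6 : 2*Real.log 6/ε ≤ Real.log k := le_trans (le_max_right _ _) hk2
    have hlkpos : (0:ℝ) < Real.log k := by linarith
    have hk1' : 1 ≤ k := by have := h4 N; omega
    have hkR1 : (1:ℝ) ≤ (k:ℝ) := by exact_mod_cast hk1'
    have hkpos : (0:ℝ) < (k:ℝ) := by linarith
    -- find epoch n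
    haveI : DecidablePred (fun m => ks m < k) := fun m => Nat.decLt _ _
    set n := Nat.findGreatest (fun m => ks m < k) k with hn
    have hNk : N ≤ k := le_trans hmono.le_apply (by omega)
    have hPn : ks n < k := by
      rw [hn]
      exact Nat.findGreatest_spec (P := fun m => ks m < k) hNk (show ks N < k by omega)
    have hnN : N ≤ n := by
      rw [hn]
      exact Nat.le_findGreatest (P := fun m => ks m < k) hNk (show ks N < k by omega)
    have hkup : k ≤ ks (n+1) := by
      by_contra hcon
      push_neg at hcon
      have hn1k : n + 1 ≤ k := by
        have h5 : ks (n+1) ≥ n+1 := hmono.le_apply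
        omega
      have := Nat.findGreatest_is_greatest (P := fun m => ks m < k) (n := k) (k := n+1)
        (by rw [← hn]; exact Nat.lt_succ_self n) hn1k
      exact this hcon
    set e' : ℝ := (((n+2:ℕ):ℝ))⁻¹ with he'
    have he'0 : (0:ℝ) < e' := by rw [he']; positivity
    have hke : (1:ℝ) ≤ (k:ℝ)^e' := by
      calc (1:ℝ) = (1:ℝ)^e' := (Real.one_rpow e').symm
        _ ≤ (k:ℝ)^e' := Real.rpow_le_rpow zero_le_one hkR1 he'0.le
    have hcnt6 : 1 + (cnt C k : ℝ) ≤ 6 * (k:ℝ)^e' := by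
      rcases le_or_gt k (b (n+1)) with hcase | hcase
      · have hc1 : cnt C k ≤ 2 * Hf n := le_trans (bnd2 n k hcase) (hS2H n)
        have hHr : (Hf n : ℝ) ≤ (k:ℝ)^e' := by
          have h0 : (0:ℝ) ≤ (Hf n:ℝ) := Nat.cast_nonneg _
          have h1 : ((Hf n:ℝ) ^ (n+2) : ℝ) ≤ (k:ℝ) := by
            have := hQ n
            exact_mod_cast (le_of_lt (lt_of_lt_of_le this (le_of_lt hPn)))
          calc (Hf n:ℝ) = ((Hf n:ℝ)^(n+2)) ^ e' :=
                (Real.pow_rpow_inv_natCast h0 (by omega)).symm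
            _ ≤ (k:ℝ)^e' := Real.rpow_le_rpow (by positivity) h1 he'0.le
        have hc1R : (cnt C k : ℝ) ≤ 2 * (Hf n : ℝ) := by exact_mod_cast hc1
        linarith
      · have hc1 : cnt C k ≤ 2 * Hf (n+1) := le_trans (bnd1 (n+1) k hkup) (hS2H (n+1))
        have hks2k : ks (n+1) ≤ 2 * k := by
          have e2 := h2H (n+1)
          have e3 := hHk (n+1)
          simp only [hb] at hcase
          omega
        have hHr : (Hf (n+1) : ℝ) ≤ 2 * (k:ℝ)^e' := by
          have h0 : (0:ℝ) ≤ (Hf (n+1):ℝ) := Nat.cast_nonneg _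
          have h1 : ((Hf (n+1):ℝ) ^ (n+3) : ℝ) ≤ 2*(k:ℝ) := by
            have e5 : (Hf (n+1))^(n+3) ≤ 2*k := by
              have e6 := hQ (n+1)
              have e7 : (Hf (n+1))^(n+1+2) = (Hf (n+1))^(n+3) := rfl
              omega
            exact_mod_cast e5
          have step1 : (Hf (n+1):ℝ) ≤ (2*(k:ℝ)) ^ (((n+3:ℕ):ℝ))⁻¹ := by
            calc (Hf (n+1):ℝ) = ((Hf (n+1):ℝ)^(n+3)) ^ (((n+3:ℕ):ℝ))⁻¹ :=
                  (Real.pow_rpow_inv_natCast h0 (by omega)).symm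
              _ ≤ (2*(k:ℝ)) ^ (((n+3:ℕ):ℝ))⁻¹ :=
                  Real.rpow_le_rpow (by positivity) h1 (by positivity)
          have step2 : (2*(k:ℝ)) ^ (((n+3:ℕ):ℝ))⁻¹
              = 2 ^ (((n+3:ℕ):ℝ))⁻¹ * (k:ℝ) ^ (((n+3:ℕ):ℝ))⁻¹ :=
            Real.mul_rpow (by norm_num) hkpos.le
          have step3 : (2:ℝ) ^ (((n+3:ℕ):ℝ))⁻¹ ≤ 2 := by
            calc (2:ℝ) ^ (((n+3:ℕ):ℝ))⁻¹ ≤ 2^(1:ℝ) := by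
                  apply Real.rpow_le_rpow_of_exponent_le one_le_two
                  rw [inv_le_one_iff₀]
                  right
                  push_cast; linarith [Nat.cast_nonneg (α := ℝ) n]
              _ = 2 := Real.rpow_one 2
          have step4 : (k:ℝ) ^ (((n+3:ℕ):ℝ))⁻¹ ≤ (k:ℝ)^e' := by
            apply Real.rpow_le_rpow_of_exponent_le hkR1
            rw [he']
            apply inv_anti₀ (by positivity)
            push_cast; linarith
          have step5 : (2:ℝ) ^ (((n+3:ℕ):ℝ))⁻¹ * (k:ℝ) ^ (((n+3:ℕ):ℝ))⁻¹
              ≤ 2 * (k:ℝ)^e' := by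
            apply mul_le_mul step3 step4 (by positivity) (by norm_num)
          calc (Hf (n+1):ℝ) ≤ (2*(k:ℝ)) ^ (((n+3:ℕ):ℝ))⁻¹ := step1
            _ = _ := step2
            _ ≤ 2 * (k:ℝ)^e' := step5
        have hc1R : (cnt C k : ℝ) ≤ 2 * (Hf (n+1) : ℝ) := by exact_mod_cast hc1
        linarith
    have hlog6 : Real.log (1 + (cnt C k:ℝ)) ≤ Real.log 6 + e' * Real.log k := by
      calc Real.log (1 + (cnt C k:ℝ)) ≤ Real.log (6 * (k:ℝ)^e') :=
            Real.log_le_log (by positivity) hcnt6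
        _ = Real.log 6 + e' * Real.log k := by
            rw [Real.log_mul (by norm_num) (by positivity), Real.log_rpow hkpos]
    have hfk : Real.log (1 + (cnt C k:ℝ)) / Real.log k < ε := by
      rw [div_lt_iff₀ hlkpos]
      have A' : 2*Real.log 6 ≤ Real.log k * ε := (div_le_iff₀ hε).mp hlogk6
      have he'N : e' ≤ 1/((N:ℝ)+2) := by
        rw [he', one_div]
        apply inv_anti₀ (by positivity)
        push_cast
        have : (N:ℝ) ≤ (n:ℝ) := by exact_mod_cast hnN
        linarith
      have B : e' * Real.log k < ε/2 * Real.log k :=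
        mul_lt_mul_of_pos_right (lt_of_le_of_lt he'N hN) hlkpos
      linarith
    rw [Real.dist_eq, sub_zero, abs_of_nonneg]
    · exact hfk
    · apply div_nonneg _ hlkpos.le
      apply Real.log_nonneg
      have : (0:ℝ) ≤ (cnt C k : ℝ) := Nat.cast_nonneg _
      linarith
  · -- not in Zh
    intro hten
    have h2 := hten.comp hmono.tendsto_atTop
    have h3 := h2.eventually_lt_const one_pos
    obtain ⟨n, hn⟩ := h3.exists
    have hHpos : (0:ℝ) < (Hf n : ℝ) := by exact_mod_cast hH1 n
    have hge : (1:ℝ) ≤ (cnt C (ks n) : ℝ) / (h (ks n) : ℝ) := by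
      rw [le_div_iff₀ (by exact_mod_cast hH1 n)]
      have := lowbnd n
      have hcast : (Hf n : ℝ) ≤ (cnt C (ks n) : ℝ) := by exact_mod_cast this
      simp only [hHf] at hcast
      linarith
    simp only [Function.comp_apply] at hn
    linarith


theorem stmt17 : ∀ h : ℕ → ℕ, InH h → ZgfN fLog gEx ≠ Zh h := by
  rintro h ⟨hinf, -⟩ hEq
  by_cases hP : ∃ n : ℕ, ∀ᶠ k in atTop, k ≤ (h k)^(n+1)
  · obtain ⟨n, hn⟩ := hP
    obtain ⟨C, hC1, hC2⟩ := caseA h n hn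
    have hmem : C ∈ Zh h := hC1
    rw [← hEq] at hmem
    exact hC2 hmem
  · push_neg at hP
    have hB : ∀ m : ℕ, ∃ᶠ k in atTop, (h k)^(m+1) < k := by
      intro m
      have h1 := hP m
      exact h1.mono (fun k hk => by omega)
    obtain ⟨C, hC1, hC2⟩ := caseB h hinf hB
    have hmem : C ∈ ZgfN fLog gEx := mem_ZgfN_of C hC1
    rw [hEq] at hmem
    exact hC2 hmem
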